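/- Suppose every round of a core-language algorithm has a uni instruction, none of the round predicates ψ↾_k,…,ψ↾_l is an equalizer, and some round among k,…,l does not have a mult instruction. Then for every θ and every tuple f with {a,b} ⊆ fire_k(f, ψ), both f →[ψ↾_k]_k … →[ψ↾_l]_l bias^?(θ) and f →[ψ↾_k]_k … →[ψ↾_l]_l bias_a^?(θ) are possible sequences of round transitions. -/

import Mathlib

open Classical

namespace HO

/-! ### Values

`none` is the undefined value `?`; defined values are natural numbers, where
`some 0` plays the role of `a` and `some 1` the role of `b` (so `a < b`). -/

abbrev Val := Option ℕ

def aVal : ℕ := 0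
def bVal : ℕ := 1

/-! ### Operations -/

inductive Op where
  | min : Op
  | smor : Op

/-- Minimum of a multiset of defined values (`none` if the multiset is empty). -/
noncomputable def msMin (S : Multiset ℕ) : Option ℕ :=
  if h : S.toFinset.Nonempty then some (S.toFinset.min' h) else none

/-- Smallest most frequent value of a multiset (`none` if the multiset is empty). -/
noncomputable def msSmor (S : Multiset ℕ) : Option ℕ :=
  if h : (S.toFinset.filter fun v => ∀ w ∈ S.toFinset, S.count w ≤ S.count v).Nonempty
  then some ((S.toFinset.filter fun v => ∀ w ∈ S.toFinset, S.count w ≤ S.count v).min' h)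
  else none

noncomputable def Op.apply : Op → Multiset ℕ → Option ℕ
  | Op.min, S => msMin S
  | Op.smor, S => msSmor S

/-! ### Rounds

A round consists of at most one `uni` instruction followed by a list of `mult`
instructions with non-increasing thresholds, all thresholds lying in `[0,1)`. -/

structure Round where
  uniThr : Option ℝ
  mults : List (ℝ × Op)
  wfU : ∀ t ∈ uniThr, 0 ≤ t ∧ t < 1
  wfM : ∀ q ∈ mults, 0 ≤ q.1 ∧ q.1 < 1
  sorted : (mults.map Prod.fst).Chain' (· ≥ ·)

def Round.hasUni (R : Round) : Prop := R.uniThr.isSome = true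
def Round.hasMult (R : Round) : Prop := R.mults ≠ []

/-- `thr_u^i`: the threshold of the uni instruction, `-1` if absent. -/
noncomputable def Round.thrU (R : Round) : ℝ := R.uniThr.getD (-1)

noncomputable def minThr : List ℝ → ℝ
  | [] => -1
  | [t] => t
  | t :: ts => min t (minThr ts)

/-- `thr_m^{i,k}`: the smallest threshold of a mult instruction, `-1` if absent. -/
noncomputable def Round.thrM (R : Round) : ℝ := minThr (R.mults.map Prod.fst)

/-- Result of the first applicable `mult` instruction. -/
noncomputable def firstMult (n : ℕ) (S : Multiset ℕ) : List (ℝ × Op) → Option ℕ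
  | [] => none
  | (t, op) :: rest =>
      if 1 < S.toFinset.card ∧ t * n < (S.card : ℝ) then op.apply S
      else firstMult n S rest

/-- `update_i(H)`: the result of the first instruction of the round whose condition
is satisfied by `H − {?}`, and `?` (i.e. `none`) if no condition applies. -/
noncomputable def Round.update (R : Round) (n : ℕ) (H : Multiset Val) : Option ℕ :=
  if ∃ t ∈ R.uniThr,
      (H.filterMap id).toFinset.card = 1 ∧ t * n < ((H.filterMap id).card : ℝ)
  then msMin (H.filterMap id)
  else firstMult n (H.filterMap id) R.mults

/-! ### Communication predicates for a round -/

/-- A conjunction of atomic communication predicates for one round: possibly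
`φ_=` (field `eq`) and possibly `φ_thr` (field `thr`, with `0 ≤ thr < 1`). -/
structure RoundPred where
  eq : Bool
  thr : Option ℝ
  wf : ∀ t ∈ thr, 0 ≤ t ∧ t < 1

/-- `thr_i(ψ)`: the threshold appearing in the predicate, `-1` if absent. -/
noncomputable def RoundPred.thrVal (φ : RoundPred) : ℝ := φ.thr.getD (-1)

def RoundPred.isEqualizer (φ : RoundPred) : Prop := φ.eq = true

/-- Satisfaction of a round predicate by a tuple of heard-of multisets. -/
def RoundPred.sat {α : Type} (φ : RoundPred) (n : ℕ) (Hs : Fin n → Multiset α) : Prop :=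
  (φ.eq = true → ∀ p q, Hs p = Hs q) ∧
  ∀ t ∈ φ.thr, ∀ p, t * n < ((Hs p).card : ℝ)

/-- Logical implication between round predicates. -/
def RoundPred.implies (φ φ' : RoundPred) : Prop :=
  ∀ (α : Type) (n : ℕ) (Hs : Fin n → Multiset α), φ.sat n Hs → φ'.sat n Hs

/-! ### Tuples of values -/

/-- The multiset of values of a tuple. -/
def msetOf {n : ℕ} (f : Fin n → Val) : Multiset Val := Finset.univ.val.map f

def soloB (n : ℕ) : Fin n → Val := fun _ => some bVal
def soloA (n : ℕ) : Fin n → Val := fun _ => some aVal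
def soloQ (n : ℕ) : Fin n → Val := fun _ => none

/-- `bias(θ)`: a tuple over `{a,b}` with `θ·n` entries equal to `b`. -/
def isBias {n : ℕ} (θ : ℝ) (f : Fin n → Val) : Prop :=
  (∀ p, f p = some aVal ∨ f p = some bVal) ∧
  ((Finset.univ.filter fun p => f p = some bVal).card : ℝ) = θ * n

/-- `spread = bias(1/2)`. -/
def isSpread {n : ℕ} (f : Fin n → Val) : Prop := isBias (1/2) f

/-- `bias^?(θ)`: a tuple over `{?,b}` with `θ·n` entries equal to `b`. -/
def isBiasQ {n : ℕ} (θ : ℝ) (f : Fin n → Val) : Prop :=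
  (∀ p, f p = none ∨ f p = some bVal) ∧
  ((Finset.univ.filter fun p => f p = some bVal).card : ℝ) = θ * n

/-- `bias_a^?(θ)`: a tuple over `{?,a}` with `θ·n` entries equal to `a`. -/
def isBiasQa {n : ℕ} (θ : ℝ) (f : Fin n → Val) : Prop :=
  (∀ p, f p = none ∨ f p = some aVal) ∧
  ((Finset.univ.filter fun p => f p = some aVal).card : ℝ) = θ * n

/-! ### Round transitions -/

/-- Round transition `f →[φ]_i f'`: every process receives a sub-multiset of the
multiset of sent values, the tuple of heard-of multisets jointly satisfies `φ`,
and every process updates its variable accordingly. -/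
def roundTrans (R : Round) (φ : RoundPred) {n : ℕ} (f f' : Fin n → Val) : Prop :=
  ∃ Hs : Fin n → Multiset Val,
    (∀ p, Hs p ≤ msetOf f) ∧ φ.sat n Hs ∧ ∀ p, f' p = R.update n (Hs p)

/-- `d ∈ fire_i(f,φ)`. -/
def fire (R : Round) (φ : RoundPred) {n : ℕ} (f : Fin n → Val) (d : Val) : Prop :=
  ∃ f' : Fin n → Val, roundTrans R φ f f' ∧ ∃ p, f' p = d

/-! ### Algorithms -/

/-- An algorithm of the core language: rounds `1,…,r` (`r ≥ 2`), with a designated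
input-update round `ir` (`1 ≤ ir < r`). -/
structure Algo where
  r : ℕ
  rounds : ℕ → Round
  ir : ℕ
  two_le_r : 2 ≤ r
  one_le_ir : 1 ≤ ir
  ir_lt_r : ir < r

noncomputable def Algo.thrU (A : Algo) (i : ℕ) : ℝ := (A.rounds i).thrU
noncomputable def Algo.thrM (A : Algo) (i : ℕ) : ℝ := (A.rounds i).thrM
def Algo.hasUni (A : Algo) (i : ℕ) : Prop := (A.rounds i).hasUni
def Algo.hasMult (A : Algo) (i : ℕ) : Prop := (A.rounds i).hasMult

/-- A phase predicate: a conjunction of atomic predicates for every round. -/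
abbrev PhasePred := ℕ → RoundPred

/-- Phase transition `(f,d) →ψ (f',d')`. -/
def phaseTrans (A : Algo) (ψ : PhasePred) {n : ℕ} (f d f' d' : Fin n → Val) : Prop :=
  ∃ g : ℕ → Fin n → Val,
    g 0 = f ∧
    (∀ i, 1 ≤ i → i ≤ A.r → roundTrans (A.rounds i) (ψ i) (g (i - 1)) (g i)) ∧
    (∀ p, f' p = if g A.ir p = none then f p else g A.ir p) ∧
    (∀ p, d' p = if d p = none then g A.r p else d p)

/-- A chain of round transitions for rounds `k,…,l`. -/
def roundChain (A : Algo) (ψ : PhasePred) (k l : ℕ) {n : ℕ} (f f' : Fin n → Val) : Prop :=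
  ∃ g : ℕ → Fin n → Val,
    g (k - 1) = f ∧ g l = f' ∧
    ∀ i, k ≤ i → i ≤ l → roundTrans (A.rounds i) (ψ i) (g (i - 1)) (g i)

/-! ### Syntactic notions -/

/-- Round `i` is preserving w.r.t. `ψ`. -/
def Algo.preserving (A : Algo) (ψ : PhasePred) (i : ℕ) : Prop :=
  ¬ A.hasUni i ∨ ¬ A.hasMult i ∨ (ψ i).thrVal < max (A.thrU i) (A.thrM i)

/-- Round `i` is solo-safe w.r.t. `ψ`. -/
def Algo.soloSafe (A : Algo) (ψ : PhasePred) (i : ℕ) : Prop :=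
  0 ≤ A.thrU i ∧ A.thrU i ≤ (ψ i).thrVal

/-- The border threshold `thr̄ = max(1 − thr_u^1, 1 − thr_m^{1,k}/2)`. -/
noncomputable def Algo.borderThr (A : Algo) : ℝ :=
  max (1 - A.thrU 1) (1 - A.thrM 1 / 2)

/-- `ψ` is a decider: all rounds are solo-safe w.r.t. `ψ`. -/
def Algo.decider (A : Algo) (ψ : PhasePred) : Prop :=
  ∀ i, 1 ≤ i → i ≤ A.r → A.soloSafe ψ i

/-- `ψ` is a unifier. -/
def Algo.unifier (A : Algo) (ψ : PhasePred) : Prop :=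
  A.thrM 1 ≤ (ψ 1).thrVal ∧
  (A.thrU 1 ≤ (ψ 1).thrVal ∨ A.borderThr ≤ (ψ 1).thrVal) ∧
  ∃ i, 1 ≤ i ∧ i ≤ A.ir ∧ (ψ i).isEqualizer ∧
    (∀ j, 2 ≤ j → j ≤ i → ¬ A.preserving ψ j) ∧
    (∀ j, i < j → j ≤ A.ir → A.soloSafe ψ j)

/-- The algorithm is syntactically safe. -/
def Algo.syntSafe (A : Algo) : Prop :=
  A.hasMult 1 ∧
  (∀ i, 1 ≤ i → i ≤ A.r → A.hasUni i) ∧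
  (∀ q ∈ (A.rounds 1).mults, q.2 = Op.smor) ∧
  1 - A.thrU (A.ir + 1) ≤ A.thrM 1 / 2 ∧
  1 - A.thrU (A.ir + 1) ≤ A.thrU 1

/-- Assumption (A) relative to the global predicate `gl`. -/
def Algo.assumptionA (A : Algo) (gl : PhasePred) : Prop :=
  ∀ i, 1 ≤ i → i ≤ A.r →
    (∀ j, 1 ≤ j → j < i → ¬ A.preserving gl j) →
    (A.hasUni i → (gl i).thrVal ≤ A.thrU i) ∧
    (A.hasMult i → (gl i).thrVal ≤ A.thrM i)

/-- Proviso (P): the global predicate has no equalizer and round `ir+1` has no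
mult instruction. -/
def Algo.provisoP (A : Algo) (gl : PhasePred) : Prop :=
  (∀ i, 1 ≤ i → i ≤ A.r → ¬ (gl i).isEqualizer) ∧ ¬ A.hasMult (A.ir + 1)

/-- Removing all mult instructions of a round. -/
def Round.dropMults (R : Round) : Round :=
  { uniThr := R.uniThr, mults := [], wfU := R.wfU,
    wfM := by simp, sorted := by first | exact List.IsChain.nil | exact List.chain'_nil | simp [List.Chain'] }

/-- Removing all mult instructions of round `i` of an algorithm. -/
def Algo.dropMultsAt (A : Algo) (i : ℕ) : Algo :=
  { A with rounds := fun j => if j = i then (A.rounds j).dropMults else A.rounds j }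

/-! ### Communication predicates, executions, consensus -/

/-- A communication predicate `(G ψ̄) ∧ F(ψ^1 ∧ F(ψ^2 ∧ … ∧ F ψ^k))`:
a global phase predicate and sporadic phase predicates `ψ^1,…,ψ^k`. -/
structure CommPred where
  glob : PhasePred
  k : ℕ
  spor : ℕ → PhasePred

/-- Roundwise implication between phase predicates of an algorithm. -/
def predImplies (A : Algo) (ψ ψ' : PhasePred) : Prop :=
  ∀ i, 1 ≤ i → i ≤ A.r → (ψ i).implies (ψ' i)

/-- An execution of an algorithm respecting a communication predicate: an infinite
sequence of phase transitions under the global predicate, together with an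
increasing sequence of times at which the sporadic predicates hold. -/
structure Exec (A : Algo) (C : CommPred) (n : ℕ) where
  inp : ℕ → Fin n → Val
  dec : ℕ → Fin n → Val
  inp0 : ∀ p, inp 0 p ≠ none
  dec0 : ∀ p, dec 0 p = none
  step : ∀ s, phaseTrans A C.glob (inp s) (dec s) (inp (s + 1)) (dec (s + 1))
  sporTime : ℕ → ℕ
  mono : StrictMono sporTime
  sporStep : ∀ i, 1 ≤ i → i ≤ C.k →
    phaseTrans A (C.spor i) (inp (sporTime i)) (dec (sporTime i))
      (inp (sporTime i + 1)) (dec (sporTime i + 1))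

/-- Agreement: in every reachable state, any two non-`?` decision values coincide. -/
def Agreement (A : Algo) (C : CommPred) : Prop :=
  ∀ n, 0 < n → ∀ E : Exec A C n, ∀ s p q v w,
    E.dec s p = some v → E.dec s q = some w → v = w

/-- Termination: every execution reaches a state where all processes have decided. -/
def Termination (A : Algo) (C : CommPred) : Prop :=
  ∀ n, 0 < n → ∀ E : Exec A C n, ∃ s, ∀ p, E.dec s p ≠ none

/-- Solving consensus: agreement and termination. -/
def SolvesConsensus (A : Algo) (C : CommPred) : Prop :=
  Agreement A C ∧ Termination A C

/-- A tuple over the two values `a`, `b` and the undefined value `?`. -/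
def twoValuedQ {n : ℕ} (f : Fin n → Val) : Prop :=
  ∀ p, f p = none ∨ f p = some aVal ∨ f p = some bVal

/-! ### Auxiliary lemmas for Statement 12 -/

section Aux

open Multiset

lemma filterMap_id_add (s t : Multiset Val) :
    (s + t).filterMap id = s.filterMap id + t.filterMap id := by
  induction s using Multiset.induction_on with
  | empty => simp
  | cons a s ih =>
    rcases a with _ | v
    · simp only [Multiset.cons_add]
      rw [Multiset.filterMap_cons_none _ _ rfl, Multiset.filterMap_cons_none _ _ rfl, ih]
    · simp only [Multiset.cons_add]
      rw [Multiset.filterMap_cons_some id _ _ rfl, Multiset.filterMap_cons_some id _ _ rfl, ih,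
        Multiset.cons_add]

lemma filterMap_id_replicate_some (c v : ℕ) :
    (Multiset.replicate c (some v : Val)).filterMap id = Multiset.replicate c v := by
  induction c with
  | zero => simp
  | succ c ih =>
    rw [Multiset.replicate_succ, Multiset.replicate_succ,
      Multiset.filterMap_cons_some id _ _ rfl, ih]

lemma filterMap_id_replicate_none (c : ℕ) :
    (Multiset.replicate c (none : Val)).filterMap id = 0 := by
  induction c with
  | zero => simp
  | succ c ih => rw [Multiset.replicate_succ, Multiset.filterMap_cons_none _ _ rfl, ih]

lemma msMin_eq {S : Multiset ℕ} {v : ℕ} (h1 : v ∈ S) (h2 : ∀ w ∈ S, v ≤ w) :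
    msMin S = some v := by
  have hv : v ∈ S.toFinset := by simpa using h1
  have hne : S.toFinset.Nonempty := ⟨v, hv⟩
  rw [msMin, dif_pos hne]
  refine congrArg some (le_antisymm (Finset.min'_le _ _ hv) (Finset.le_min' _ _ _ ?_))
  intro y hy
  exact h2 y (by simpa using hy)

lemma msSmor_eq {S : Multiset ℕ} {v : ℕ} (h1 : v ∈ S)
    (h2 : ∀ w ∈ S, S.count w ≤ S.count v)
    (h3 : ∀ w ∈ S, S.count w = S.count v → v ≤ w) : msSmor S = some v := by
  have hv : v ∈ S.toFinset.filter fun x => ∀ w ∈ S.toFinset, S.count w ≤ S.count x := by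
    refine Finset.mem_filter.mpr ⟨by simpa using h1, ?_⟩
    intro w hw; exact h2 w (by simpa using hw)
  have hne : (S.toFinset.filter fun x => ∀ w ∈ S.toFinset, S.count w ≤ S.count x).Nonempty :=
    ⟨v, hv⟩
  rw [msSmor, dif_pos hne]
  refine congrArg some (le_antisymm (Finset.min'_le _ _ hv) (Finset.le_min' _ _ _ ?_))
  intro y hy
  rcases Finset.mem_filter.mp hy with ⟨hyS, hyprop⟩
  have hyS' : y ∈ S := by simpa using hyS
  have h1' : S.count v ≤ S.count y := hyprop v (by simpa using h1)
  have h2' : S.count y ≤ S.count v := h2 y hyS'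
  exact h3 y hyS' (le_antisymm h2' h1')

lemma firstMult_of_card_le (n : ℕ) (S : Multiset ℕ) (L : List (ℝ × Op))
    (h : S.toFinset.card ≤ 1) : firstMult n S L = none := by
  induction L with
  | nil => rfl
  | cons a L ih =>
    rcases a with ⟨t, op⟩
    rw [firstMult, if_neg, ih]
    rintro ⟨h1, -⟩; omega

lemma update_eq_of_uni (R : Round) {t : ℝ} (ht : R.uniThr = some t) (n : ℕ)
    (H : Multiset Val) {s x : ℕ} (hS : H.filterMap id = Multiset.replicate s x)
    (hs : 1 ≤ s) (hfire : t * n < (s : ℝ)) : R.update n H = some x := by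
  have hcard : (H.filterMap id).toFinset.card = 1 := by
    rw [hS, Multiset.toFinset_replicate, if_neg (by omega : ¬ s = 0)]
    simp
  have hc : ∃ t' ∈ R.uniThr,
      (H.filterMap id).toFinset.card = 1 ∧ t' * n < ((H.filterMap id).card : ℝ) := by
    refine ⟨t, by simp [ht], hcard, ?_⟩
    rw [hS, Multiset.card_replicate]; exact hfire
  rw [Round.update, if_pos hc]
  refine msMin_eq ?_ ?_
  · rw [hS]; exact Multiset.mem_replicate.mpr ⟨by omega, rfl⟩
  · intro w hw
    rw [hS] at hw
    exact le_of_eq (Multiset.eq_of_mem_replicate hw).symm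

lemma update_eq_none_uniform (R : Round) {t : ℝ} (ht : R.uniThr = some t) (n : ℕ)
    (H : Multiset Val) {s x : ℕ} (hS : H.filterMap id = Multiset.replicate s x)
    (hfire : ¬ t * n < (s : ℝ)) : R.update n H = none := by
  have hcard : (H.filterMap id).toFinset.card ≤ 1 := by
    rw [hS]
    rw [Multiset.toFinset_replicate]
    split <;> simp
  rw [Round.update, if_neg, firstMult_of_card_le _ _ _ hcard]
  rintro ⟨t', ht', h1, h2⟩
  rw [ht] at ht'
  have : t' = t := by simpa using ht'.symm
  subst this
  rw [hS, Multiset.card_replicate] at h2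
  exact hfire h2

lemma update_eq_none_mixed_nomult (R : Round) (hm : R.mults = []) (n : ℕ)
    (H : Multiset Val) {x y : ℕ} (hxy : x ≠ y)
    (hx : x ∈ H.filterMap id) (hy : y ∈ H.filterMap id) : R.update n H = none := by
  rw [Round.update, if_neg, hm]
  · rfl
  rintro ⟨t', -, h1, -⟩
  rcases Finset.card_eq_one.mp h1 with ⟨z, hz⟩
  have hx' : x ∈ (H.filterMap id).toFinset := by simpa using hx
  have hy' : y ∈ (H.filterMap id).toFinset := by simpa using hy
  rw [hz] at hx' hy'
  simp only [Finset.mem_singleton] at hx' hy'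
  exact hxy (hx'.trans hy'.symm)

lemma toFinset_mixed {p q : ℕ} (hp : 1 ≤ p) (hq : 1 ≤ q) :
    (Multiset.replicate p 0 + Multiset.replicate q 1).toFinset = {0, 1} := by
  rw [Multiset.toFinset_add, Multiset.toFinset_replicate, Multiset.toFinset_replicate,
    if_neg (by omega : ¬ p = 0), if_neg (by omega : ¬ q = 0)]
  rfl

lemma update_eq_mixed_aux (R : Round) {t1 : ℝ} {o1 : Op} {rest : List (ℝ × Op)}
    (hm : R.mults = (t1, o1) :: rest) (n : ℕ) (H : Multiset Val) {p q : ℕ}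
    (hS : H.filterMap id = Multiset.replicate p 0 + Multiset.replicate q 1)
    (hp : 1 ≤ p) (hq : 1 ≤ q) (hfire : t1 * n < ((p + q : ℕ) : ℝ)) :
    R.update n H = o1.apply (Multiset.replicate p 0 + Multiset.replicate q 1) := by
  have hcard2 : (H.filterMap id).toFinset.card = 2 := by
    rw [hS, toFinset_mixed hp hq]; decide
  rw [Round.update, if_neg, hm, firstMult, if_pos, hS]
  · refine ⟨by omega, ?_⟩
    rw [hS, Multiset.card_add, Multiset.card_replicate, Multiset.card_replicate]
    exact_mod_cast hfire
  rintro ⟨t', -, h1, -⟩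
  omega

lemma count_mixed_zero (p q : ℕ) :
    (Multiset.replicate p 0 + Multiset.replicate q 1).count 0 = p := by
  simp [Multiset.count_replicate]

lemma count_mixed_one (p q : ℕ) :
    (Multiset.replicate p 0 + Multiset.replicate q 1).count 1 = q := by
  simp [Multiset.count_replicate]

lemma mem_mixed {p q w : ℕ} (hw : w ∈ Multiset.replicate p 0 + Multiset.replicate q 1) :
    w = 0 ∨ w = 1 := by
  rcases Multiset.mem_add.mp hw with h | h
  · exact Or.inl (Multiset.eq_of_mem_replicate h)
  · exact Or.inr (Multiset.eq_of_mem_replicate h)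

lemma mixed_min {p q : ℕ} (hp : 1 ≤ p) :
    msMin (Multiset.replicate p 0 + Multiset.replicate q 1) = some 0 := by
  refine msMin_eq ?_ ?_
  · exact Multiset.mem_add.mpr (Or.inl (Multiset.mem_replicate.mpr ⟨by omega, rfl⟩))
  · intro w _; omega

lemma mixed_smor_a {p q : ℕ} (hp : 1 ≤ p) (hqp : q ≤ p) :
    msSmor (Multiset.replicate p 0 + Multiset.replicate q 1) = some 0 := by
  refine msSmor_eq ?_ ?_ ?_
  · exact Multiset.mem_add.mpr (Or.inl (Multiset.mem_replicate.mpr ⟨by omega, rfl⟩))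
  · intro w hw
    rcases mem_mixed hw with h | h <;> subst h <;>
      simp only [count_mixed_zero, count_mixed_one] <;> omega
  · intro w _ _; omega

lemma mixed_smor_b {p q : ℕ} (hq : 1 ≤ q) (hpq : p < q) :
    msSmor (Multiset.replicate p 0 + Multiset.replicate q 1) = some 1 := by
  refine msSmor_eq ?_ ?_ ?_
  · exact Multiset.mem_add.mpr (Or.inr (Multiset.mem_replicate.mpr ⟨by omega, rfl⟩))
  · intro w hw
    rcases mem_mixed hw with h | h <;> subst h <;>
      simp only [count_mixed_zero, count_mixed_one] <;> omega
  · intro w hw hc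
    rcases mem_mixed hw with h | h
    · subst h; rw [count_mixed_zero, count_mixed_one] at hc; omega
    · omega

lemma mem_of_update_nomult {R : Round} (hm : R.mults = []) {n : ℕ} {H : Multiset Val}
    {v : ℕ} (h : R.update n H = some v) : (some v : Val) ∈ H := by
  rw [Round.update] at h
  split at h
  · rw [msMin] at h
    split at h
    · rename_i hne
      have hv : v ∈ (H.filterMap id).toFinset := by
        have := Finset.min'_mem (H.filterMap id).toFinset hne
        rwa [Option.some_inj.mp h] at this
      have hv' : v ∈ H.filterMap id := by simpa using hv
      rcases (Multiset.mem_filterMap id H).mp hv' with ⟨x, hx, hxv⟩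
      rcases x with _ | u
      · cases hxv
      · cases hxv; exact hx
    · cases h
  · rw [hm] at h; cases h

end Aux
section Aux2

/-- The tuple whose first `c` entries are `v` and the rest `w`. -/
def stepT (n c : ℕ) (v w : Val) : Fin n → Val := fun p => if (p : ℕ) < c then v else w

lemma stepT_shape (n c : ℕ) (v w : Val) (p : Fin n) :
    stepT n c v w p = v ∨ stepT n c v w p = w := by
  unfold stepT; split <;> simp

lemma count_msetOf {n : ℕ} (f : Fin n → Val) (x : Val) :
    (msetOf f).count x = (Finset.univ.filter fun p => f p = x).card := by
  rw [msetOf, Multiset.count_map, Finset.card, Finset.filter_val]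
  congr 1
  exact Multiset.filter_congr (fun p _ => ⟨fun h => h.symm, fun h => h.symm⟩)

lemma card_filter_fin_lt (n c : ℕ) (hc : c ≤ n) :
    (Finset.univ.filter fun p : Fin n => (p : ℕ) < c).card = c := by
  have h : (Finset.univ.filter fun p : Fin n => (p : ℕ) < c).card = (Finset.range c).card := by
    refine Finset.card_bij' (fun p _ => (p : ℕ))
      (fun i hi => ⟨i, lt_of_lt_of_le (Finset.mem_range.mp hi) hc⟩) ?_ ?_ ?_ ?_
    · intro p hp; exact Finset.mem_range.mpr ((Finset.mem_filter.mp hp).2)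
    · intro i hi; exact Finset.mem_filter.mpr ⟨Finset.mem_univ _, Finset.mem_range.mp hi⟩
    · intro p _; rfl
    · intro i _; rfl
  rw [h, Finset.card_range]

lemma msetOf_stepT (n c : ℕ) (hc : c ≤ n) (v w : Val) (hvw : v ≠ w) :
    msetOf (stepT n c v w) = Multiset.replicate c v + Multiset.replicate (n - c) w := by
  have hcv : (Finset.univ.filter fun p : Fin n => stepT n c v w p = v).card = c := by
    have hfv : (Finset.univ.filter fun p : Fin n => stepT n c v w p = v)
        = Finset.univ.filter fun p : Fin n => (p : ℕ) < c := by
      apply Finset.filter_congr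
      intro p _
      unfold stepT
      constructor
      · intro h; by_contra hlt; rw [if_neg hlt] at h; exact hvw h.symm
      · intro h; rw [if_pos h]
    rw [hfv, card_filter_fin_lt n c hc]
  have hcw : (Finset.univ.filter fun p : Fin n => stepT n c v w p = w).card = n - c := by
    have hfw : (Finset.univ.filter fun p : Fin n => stepT n c v w p = w)
        = Finset.univ.filter fun p : Fin n => ¬ (p : ℕ) < c := by
      apply Finset.filter_congr
      intro p _
      unfold stepT
      constructor
      · intro h hlt; rw [if_pos hlt] at h; exact hvw h
      · intro h; rw [if_neg h]
    rw [hfw]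
    have h2 := Finset.card_filter_add_card_filter_not
      (s := (Finset.univ : Finset (Fin n))) (p := fun p : Fin n => (p : ℕ) < c)
    rw [card_filter_fin_lt n c hc] at h2
    simp only [Finset.card_univ, Fintype.card_fin] at h2
    omega
  ext x
  rw [count_msetOf, Multiset.count_add, Multiset.count_replicate, Multiset.count_replicate]
  by_cases hxv : x = v
  · rw [hxv, if_pos rfl, if_neg (fun h : w = v => hvw h.symm), add_zero]
    exact hcv
  · rw [if_neg (fun h : v = x => hxv h.symm)]
    by_cases hxw : x = w
    · rw [hxw, if_pos rfl, zero_add]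
      exact hcw
    · rw [if_neg (fun h : w = x => hxw h.symm), add_zero]
      rw [Finset.card_eq_zero, Finset.filter_eq_empty_iff]
      intro p _
      rcases stepT_shape n c v w p with h | h <;> rw [h]
      · exact fun hh => hxv hh.symm
      · exact fun hh => hxw hh.symm

lemma thrVal_of_mem {φ : RoundPred} {t : ℝ} (ht : t ∈ φ.thr) : t = φ.thrVal := by
  have h : φ.thr = some t := Option.mem_def.mp ht
  rw [RoundPred.thrVal, h, Option.getD_some]

lemma emitTrans {n : ℕ} {R : Round} {φ : RoundPred} (heq : ¬ φ.isEqualizer)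
    {f h : Fin n → Val} (H : Fin n → Multiset Val)
    (hle : ∀ p, H p ≤ msetOf f)
    (hthr : ∀ p, φ.thrVal * n < ((H p).card : ℝ))
    (hup : ∀ p, R.update n (H p) = h p) : roundTrans R φ f h := by
  refine ⟨H, hle, ⟨fun he => absurd he heq, ?_⟩, fun p => (hup p).symm⟩
  intro t ht p
  rw [thrVal_of_mem ht]
  exact hthr p

end Aux2
section Caps

lemma some_ne_some {x y : ℕ} (h : x ≠ y) : (some x : Val) ≠ some y := by simpa using h

/-- Capability of a round after the mult-free round: from a tuple with
`m` undefined values and the rest `w`, any tuple over `{?, w}` is reachable. -/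
lemma cap_post (R : Round) (φ : RoundPred) (hut : R.uniThr = some R.thrU)
    (hu0 : 0 ≤ R.thrU) (heq : ¬ φ.isEqualizer) {M : ℝ} (hM0 : 0 ≤ M)
    (hτM : φ.thrVal ≤ M) (huM : R.thrU ≤ M)
    {n : ℕ} (hn : 4 < (1 - M) * n) (w : ℕ)
    (h : Fin n → Val) (hsh : ∀ p, h p = none ∨ h p = some w) :
    roundTrans R φ (stepT n (⌊(max (φ.thrVal - R.thrU) 0) * n⌋₊ + 2) none (some w)) h := by
  have hν0 : (0:ℝ) ≤ (n:ℝ) := Nat.cast_nonneg n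
  have hM1 : 0 < 1 - M := by nlinarith
  have hν4 : 4 < (n:ℝ) := by nlinarith
  have hy0 : 0 ≤ max (φ.thrVal - R.thrU) 0 := le_max_right _ _
  have hyM : max (φ.thrVal - R.thrU) 0 ≤ M - R.thrU := max_le (by linarith) (by linarith)
  have hyτ : φ.thrVal - R.thrU ≤ max (φ.thrVal - R.thrU) 0 := le_max_left _ _
  obtain ⟨m, hmdef⟩ : ∃ m : ℕ, m = ⌊(max (φ.thrVal - R.thrU) 0) * n⌋₊ + 2 := ⟨_, rfl⟩
  obtain ⟨s, hsdef⟩ : ∃ s : ℕ, s = ⌊R.thrU * n⌋₊ := ⟨_, rfl⟩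
  rw [← hmdef]
  have hmle : (m:ℝ) ≤ (max (φ.thrVal - R.thrU) 0) * n + 2 := by
    have := Nat.floor_le (mul_nonneg hy0 hν0)
    rw [hmdef]; push_cast; linarith
  have hmgt : (max (φ.thrVal - R.thrU) 0) * n + 1 < (m:ℝ) := by
    have := Nat.lt_floor_add_one ((max (φ.thrVal - R.thrU) 0) * (n:ℝ))
    rw [hmdef]; push_cast; linarith
  have hmn : (m:ℝ) < (n:ℝ) - 2 := by nlinarith
  have hmnn : m < n := by exact_mod_cast (by linarith : (m:ℝ) < (n:ℝ))
  have hcast : ((n - m : ℕ):ℝ) = (n:ℝ) - m := by rw [Nat.cast_sub hmnn.le]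
  have hB : R.thrU * n < ((n - m : ℕ):ℝ) := by rw [hcast]; nlinarith
  have hsle : (s:ℝ) ≤ R.thrU * n := by
    rw [hsdef]; exact Nat.floor_le (mul_nonneg hu0 hν0)
  have hsgt : R.thrU * n - 1 < (s:ℝ) := by
    have := Nat.lt_floor_add_one (R.thrU * (n:ℝ))
    rw [hsdef]; push_cast; linarith
  have hsnm : s < n - m := by
    have : (s:ℝ) < ((n - m : ℕ):ℝ) := lt_of_le_of_lt hsle hB
    exact_mod_cast this
  have h1nm : 1 ≤ n - m := by omega
  have hτms : φ.thrVal * n < (m:ℝ) + s := by nlinarith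
  have hτν : φ.thrVal * n < (n:ℝ) := by nlinarith
  have hms : msetOf (stepT n m none (some w))
      = Multiset.replicate m (none : Val) + Multiset.replicate (n - m) (some w) :=
    msetOf_stepT n m hmnn.le none (some w) (by simp)
  refine emitTrans heq (fun p => if h p = none
    then Multiset.replicate m (none : Val) + Multiset.replicate s (some w)
    else Multiset.replicate m (none : Val) + Multiset.replicate (n - m) (some w)) ?_ ?_ ?_
  · intro p; rw [hms]; split
    · exact add_le_add le_rfl ((Multiset.replicate_le_replicate _).mpr hsnm.le)
    · exact le_rfl
  · intro p; split
    · rw [Multiset.card_add, Multiset.card_replicate, Multiset.card_replicate, Nat.cast_add]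
      exact hτms
    · rw [Multiset.card_add, Multiset.card_replicate, Multiset.card_replicate, Nat.cast_add,
        hcast]
      linarith
  · intro p
    by_cases hp : h p = none
    · rw [if_pos hp, hp]
      refine update_eq_none_uniform R hut n _ (s := s) (x := w) ?_ ?_
      · rw [filterMap_id_add, filterMap_id_replicate_none, filterMap_id_replicate_some, zero_add]
      · exact not_lt.mpr hsle
    · have hpw : h p = some w := (hsh p).resolve_left hp
      rw [if_neg hp, hpw]
      refine update_eq_of_uni R hut n _ ?_ h1nm ?_
      · rw [filterMap_id_add, filterMap_id_replicate_none, filterMap_id_replicate_some, zero_add]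
      · exact hB

/-- Capability of the mult-free round. -/
lemma cap_jstar (R : Round) (φ : RoundPred) (hut : R.uniThr = some R.thrU)
    (hu0 : 0 ≤ R.thrU) (hnm : R.mults = []) (heq : ¬ φ.isEqualizer) {M : ℝ} (hM0 : 0 ≤ M)
    (hτM : φ.thrVal ≤ M) (huM : R.thrU ≤ M) {n : ℕ} (hn : 4 < (1 - M) * n)
    (w wb : ℕ) (hwwb : w ≠ wb)
    (h : Fin n → Val) (hsh : ∀ p, h p = none ∨ h p = some w) :
    roundTrans R φ
      (stepT n (⌊(max (max φ.thrVal R.thrU) 0) * n⌋₊ + 1) (some w) (some wb)) h := by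
  have hν0 : (0:ℝ) ≤ (n:ℝ) := Nat.cast_nonneg n
  have hM1 : 0 < 1 - M := by nlinarith
  have hν4 : 4 < (n:ℝ) := by nlinarith
  have hx0 : 0 ≤ max (max φ.thrVal R.thrU) 0 := le_max_right _ _
  have hxM : max (max φ.thrVal R.thrU) 0 ≤ M := max_le (max_le hτM huM) hM0
  have hxτ : φ.thrVal ≤ max (max φ.thrVal R.thrU) 0 :=
    le_trans (le_max_left _ _) (le_max_left _ _)
  have hxu : R.thrU ≤ max (max φ.thrVal R.thrU) 0 :=
    le_trans (le_max_right _ _) (le_max_left _ _)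
  obtain ⟨b, hbdef⟩ : ∃ b : ℕ, b = ⌊(max (max φ.thrVal R.thrU) 0) * n⌋₊ + 1 := ⟨_, rfl⟩
  rw [← hbdef]
  have hble : (b:ℝ) ≤ (max (max φ.thrVal R.thrU) 0) * n + 1 := by
    have := Nat.floor_le (mul_nonneg hx0 hν0)
    rw [hbdef]; push_cast; linarith
  have hbgt : (max (max φ.thrVal R.thrU) 0) * n < (b:ℝ) := by
    have := Nat.lt_floor_add_one ((max (max φ.thrVal R.thrU) 0) * (n:ℝ))
    rw [hbdef]; push_cast; linarith
  have hbn : (b:ℝ) < (n:ℝ) - 2 := by nlinarith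
  have hbnn : b < n := by exact_mod_cast (by linarith : (b:ℝ) < (n:ℝ))
  have hb1 : 1 ≤ b := by omega
  have hτb : φ.thrVal * n < (b:ℝ) := by nlinarith
  have hub : R.thrU * n < (b:ℝ) := by nlinarith
  have hτν : φ.thrVal * n < (n:ℝ) := by nlinarith
  have hms : msetOf (stepT n b (some w) (some wb))
      = Multiset.replicate b (some w : Val) + Multiset.replicate (n - b) (some wb) :=
    msetOf_stepT n b hbnn.le _ _ (some_ne_some hwwb)
  refine emitTrans heq (fun p => if h p = none
    then Multiset.replicate b (some w : Val) + Multiset.replicate (n - b) (some wb)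
    else Multiset.replicate b (some w : Val)) ?_ ?_ ?_
  · intro p; rw [hms]; split
    · exact le_rfl
    · exact le_add_of_nonneg_right (Multiset.zero_le _)
  · intro p; split
    · rw [Multiset.card_add, Multiset.card_replicate, Multiset.card_replicate,
        (by omega : b + (n - b) = n)]
      exact hτν
    · rw [Multiset.card_replicate]; exact hτb
  · intro p
    by_cases hp : h p = none
    · rw [if_pos hp, hp]
      refine update_eq_none_mixed_nomult R hnm n _ hwwb ?_ ?_
      · rw [filterMap_id_add, filterMap_id_replicate_some, filterMap_id_replicate_some]
        exact Multiset.mem_add.mpr (Or.inl (Multiset.mem_replicate.mpr ⟨by omega, rfl⟩))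
      · rw [filterMap_id_add, filterMap_id_replicate_some, filterMap_id_replicate_some]
        exact Multiset.mem_add.mpr (Or.inr (Multiset.mem_replicate.mpr ⟨by omega, rfl⟩))
    · have hpw : h p = some w := (hsh p).resolve_left hp
      rw [if_neg hp, hpw]
      exact update_eq_of_uni R hut n _ (filterMap_id_replicate_some b w) hb1 hub

/-- Capability of a round before the mult-free round whose first mult instruction
uses `min`. -/
lemma cap_pre_min (R : Round) (φ : RoundPred) (hut : R.uniThr = some R.thrU)
    (hu0 : 0 ≤ R.thrU) {t1 : ℝ} {rest : List (ℝ × Op)}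
    (hmults : R.mults = (t1, Op.min) :: rest)
    (heq : ¬ φ.isEqualizer) {M : ℝ} (hM0 : 0 ≤ M) (hτM : φ.thrVal ≤ M) (huM : R.thrU ≤ M)
    (ht1M : t1 ≤ M) {n : ℕ} (hn : 4 < (1 - M) * n)
    (h : Fin n → Val) (hsh : ∀ p, h p = some aVal ∨ h p = some bVal) :
    roundTrans R φ (stepT n 1 (some aVal) (some bVal)) h := by
  have hν0 : (0:ℝ) ≤ (n:ℝ) := Nat.cast_nonneg n
  have hM1 : 0 < 1 - M := by nlinarith
  have hν4 : 4 < (n:ℝ) := by nlinarith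
  have hn1 : 1 ≤ n := by
    have : (1:ℝ) ≤ (n:ℝ) := by linarith
    exact_mod_cast this
  have hx0 : 0 ≤ max (max t1 φ.thrVal) 0 := le_max_right _ _
  have hxM : max (max t1 φ.thrVal) 0 ≤ M := max_le (max_le ht1M hτM) hM0
  have hxτ : φ.thrVal ≤ max (max t1 φ.thrVal) 0 :=
    le_trans (le_max_right _ _) (le_max_left _ _)
  have hxt1 : t1 ≤ max (max t1 φ.thrVal) 0 := le_trans (le_max_left _ _) (le_max_left _ _)
  obtain ⟨s, hsdef⟩ : ∃ s : ℕ, s = ⌊(max (max t1 φ.thrVal) 0) * n⌋₊ + 2 := ⟨_, rfl⟩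
  have hsle : (s:ℝ) ≤ (max (max t1 φ.thrVal) 0) * n + 2 := by
    have := Nat.floor_le (mul_nonneg hx0 hν0)
    rw [hsdef]; push_cast; linarith
  have hsgt : (max (max t1 φ.thrVal) 0) * n + 1 < (s:ℝ) := by
    have := Nat.lt_floor_add_one ((max (max t1 φ.thrVal) 0) * (n:ℝ))
    rw [hsdef]; push_cast; linarith
  have hs2 : 2 ≤ s := by omega
  have hsn : s ≤ n := by
    have : (s:ℝ) < (n:ℝ) := by nlinarith
    exact le_of_lt (by exact_mod_cast this)
  have hτs : φ.thrVal * n < (s:ℝ) := by nlinarith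
  have ht1s : t1 * n < (s:ℝ) := by nlinarith
  have hcast1 : ((n - 1 : ℕ):ℝ) = (n:ℝ) - 1 := by rw [Nat.cast_sub hn1]; push_cast; ring
  have hτn1 : φ.thrVal * n < ((n - 1 : ℕ):ℝ) := by rw [hcast1]; nlinarith
  have hun1 : R.thrU * n < ((n - 1 : ℕ):ℝ) := by rw [hcast1]; nlinarith
  have h1n1 : 1 ≤ n - 1 := by omega
  have hms : msetOf (stepT n 1 (some aVal) (some bVal))
      = Multiset.replicate 1 (some aVal : Val) + Multiset.replicate (n - 1) (some bVal) :=
    msetOf_stepT n 1 hn1 _ _ (some_ne_some (by simp [aVal, bVal]))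
  refine emitTrans heq (fun p => if h p = some aVal
    then Multiset.replicate 1 (some aVal : Val) + Multiset.replicate (s - 1) (some bVal)
    else Multiset.replicate (n - 1) (some bVal : Val)) ?_ ?_ ?_
  · intro p; rw [hms]; split
    · exact add_le_add le_rfl ((Multiset.replicate_le_replicate _).mpr (by omega))
    · exact le_add_of_nonneg_left (Multiset.zero_le _)
  · intro p; split
    · rw [Multiset.card_add, Multiset.card_replicate, Multiset.card_replicate,
        (by omega : 1 + (s - 1) = s)]
      exact hτs
    · rw [Multiset.card_replicate]; exact hτn1
  · intro p
    by_cases hp : h p = some aVal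
    · rw [if_pos hp, hp]
      have hS : (Multiset.replicate 1 (some aVal : Val)
          + Multiset.replicate (s - 1) (some bVal)).filterMap id
          = Multiset.replicate 1 0 + Multiset.replicate (s - 1) 1 := by
        rw [filterMap_id_add, filterMap_id_replicate_some, filterMap_id_replicate_some]; rfl
      have hupd := update_eq_mixed_aux R hmults n _ hS le_rfl (by omega)
        (by rw [(by omega : 1 + (s - 1) = s)]; exact ht1s)
      rw [hupd]
      show msMin _ = some aVal
      exact mixed_min le_rfl
    · have hpb : h p = some bVal := (hsh p).resolve_left hp
      rw [if_neg hp, hpb]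
      exact update_eq_of_uni R hut n _ (filterMap_id_replicate_some _ _) h1n1 hun1

/-- Capability of a round before the mult-free round whose first mult instruction
uses `smor`. -/
lemma cap_pre_smor (R : Round) (φ : RoundPred) (hut : R.uniThr = some R.thrU)
    (hu0 : 0 ≤ R.thrU) {t1 : ℝ} {rest : List (ℝ × Op)}
    (hmults : R.mults = (t1, Op.smor) :: rest)
    (heq : ¬ φ.isEqualizer) {M : ℝ} (hM0 : 0 ≤ M) (hτM : φ.thrVal ≤ M) (huM : R.thrU ≤ M)
    (ht1M : t1 ≤ M) {n : ℕ} (hn : 4 < (1 - M) * n)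
    (h : Fin n → Val) (hsh : ∀ p, h p = some aVal ∨ h p = some bVal) :
    roundTrans R φ
      (stepT n (⌊(max (max t1 φ.thrVal) 0) * n / 2⌋₊ + 1) (some aVal) (some bVal)) h := by
  have hν0 : (0:ℝ) ≤ (n:ℝ) := Nat.cast_nonneg n
  have hM1 : 0 < 1 - M := by nlinarith
  have hν4 : 4 < (n:ℝ) := by nlinarith
  have hx0 : 0 ≤ max (max t1 φ.thrVal) 0 := le_max_right _ _
  have hxM : max (max t1 φ.thrVal) 0 ≤ M := max_le (max_le ht1M hτM) hM0
  have hxτ : φ.thrVal ≤ max (max t1 φ.thrVal) 0 :=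
    le_trans (le_max_right _ _) (le_max_left _ _)
  have hxt1 : t1 ≤ max (max t1 φ.thrVal) 0 := le_trans (le_max_left _ _) (le_max_left _ _)
  obtain ⟨c, hcdef⟩ : ∃ c : ℕ, c = ⌊(max (max t1 φ.thrVal) 0) * n / 2⌋₊ + 1 := ⟨_, rfl⟩
  rw [← hcdef]
  have hcle : (c:ℝ) ≤ (max (max t1 φ.thrVal) 0) * n / 2 + 1 := by
    have := Nat.floor_le (by positivity : (0:ℝ) ≤ (max (max t1 φ.thrVal) 0) * n / 2)
    rw [hcdef]; push_cast; linarith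
  have hcgt : (max (max t1 φ.thrVal) 0) * n / 2 < (c:ℝ) := by
    have := Nat.lt_floor_add_one ((max (max t1 φ.thrVal) 0) * (n:ℝ) / 2)
    rw [hcdef]; push_cast; linarith
  have h2c : (max (max t1 φ.thrVal) 0) * n < (c:ℝ) + c := by linarith
  have h2c1 : 2 * c + 1 ≤ n := by
    have hr : 2 * (c:ℝ) + 1 < (n:ℝ) := by nlinarith
    have : (2 * c + 1 : ℕ) < n := by exact_mod_cast (by push_cast; linarith : ((2 * c + 1 : ℕ):ℝ) < (n:ℝ))
    omega
  have hc1 : 1 ≤ c := by omega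
  have hcn : c ≤ n := by omega
  have hτ2c : φ.thrVal * n < (c:ℝ) + c := by nlinarith
  have ht12c : t1 * n < (c:ℝ) + c := by nlinarith
  have hms : msetOf (stepT n c (some aVal) (some bVal))
      = Multiset.replicate c (some aVal : Val) + Multiset.replicate (n - c) (some bVal) :=
    msetOf_stepT n c hcn _ _ (some_ne_some (by simp [aVal, bVal]))
  refine emitTrans heq (fun p => if h p = some aVal
    then Multiset.replicate c (some aVal : Val) + Multiset.replicate c (some bVal)
    else Multiset.replicate c (some aVal : Val) + Multiset.replicate (c + 1) (some bVal)) ?_ ?_ ?_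
  · intro p; rw [hms]; split
    · exact add_le_add le_rfl ((Multiset.replicate_le_replicate _).mpr (by omega))
    · exact add_le_add le_rfl ((Multiset.replicate_le_replicate _).mpr (by omega))
  · intro p; split
    · rw [Multiset.card_add, Multiset.card_replicate, Multiset.card_replicate, Nat.cast_add]
      exact hτ2c
    · rw [Multiset.card_add, Multiset.card_replicate, Multiset.card_replicate, Nat.cast_add]
      push_cast
      linarith
  · intro p
    by_cases hp : h p = some aVal
    · rw [if_pos hp, hp]
      have hS : (Multiset.replicate c (some aVal : Val)
          + Multiset.replicate c (some bVal)).filterMap id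
          = Multiset.replicate c 0 + Multiset.replicate c 1 := by
        rw [filterMap_id_add, filterMap_id_replicate_some, filterMap_id_replicate_some]; rfl
      have hupd := update_eq_mixed_aux R hmults n _ hS hc1 hc1 (by push_cast; linarith)
      rw [hupd]
      show msSmor _ = some aVal
      exact mixed_smor_a hc1 le_rfl
    · have hpb : h p = some bVal := (hsh p).resolve_left hp
      rw [if_neg hp, hpb]
      have hS : (Multiset.replicate c (some aVal : Val)
          + Multiset.replicate (c + 1) (some bVal)).filterMap id
          = Multiset.replicate c 0 + Multiset.replicate (c + 1) 1 := by
        rw [filterMap_id_add, filterMap_id_replicate_some, filterMap_id_replicate_some]; rfl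
      have hupd := update_eq_mixed_aux R hmults n _ hS hc1 (by omega) (by push_cast; linarith)
      rw [hupd]
      show msSmor _ = some bVal
      exact mixed_smor_b (by omega) (by omega)

end Caps
section Bounds

lemma thrVal_lt_one (φ : RoundPred) : φ.thrVal < 1 := by
  rw [RoundPred.thrVal]
  cases hφ : φ.thr with
  | none => norm_num
  | some t => rw [Option.getD_some]; exact (φ.wf t (by simp [hφ])).2

lemma thrU_lt_one (R : Round) : R.thrU < 1 := by
  rw [Round.thrU]
  cases hφ : R.uniThr with
  | none => norm_num
  | some t => rw [Option.getD_some]; exact (R.wfU t (by simp [hφ])).2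

lemma headThr_lt_one (R : Round) : ((R.mults.map Prod.fst).headD 0) < 1 := by
  cases hm : R.mults with
  | nil => norm_num
  | cons q rest =>
    rw [List.map_cons, List.headD_cons]
    exact (R.wfM q (by simp [hm])).2

lemma uniThr_eq_thrU {R : Round} (h : R.hasUni) : R.uniThr = some R.thrU ∧ 0 ≤ R.thrU := by
  rcases Option.isSome_iff_exists.mp h with ⟨t, ht⟩
  have htt : R.thrU = t := by rw [Round.thrU, ht, Option.getD_some]
  refine ⟨by rw [ht, htt], ?_⟩
  rw [htt]
  exact (R.wfU t (by simp [ht])).1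

end Bounds
/-- Lemma 9.  Suppose every round has a uni instruction, none
of `ψ↾_k,…,ψ↾_l` is an equalizer, and some round among `k,…,l` has no mult
instruction.  Then for every `θ` and every `f` with `{a,b} ⊆ fire_k(f,ψ)`, both
`f →[ψ↾_k]_k ⋯ →[ψ↾_l]_l bias^?(θ)` and `f →[ψ↾_k]_k ⋯ →[ψ↾_l]_l bias_a^?(θ)`
are possible (every tuple over `{?,b}` is a `bias^?(θ)` and every tuple over
`{?,a}` is a `bias_a^?(θ)`; this holds for all sufficiently large `n`). -/
theorem any_qbias_reachable (A : Algo) (ψ : PhasePred) (k l : ℕ)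
    (hk : 1 ≤ k) (hkl : k ≤ l) (hl : l ≤ A.r)
    (huni : ∀ j, 1 ≤ j → j ≤ A.r → A.hasUni j)
    (hne : ∀ j, k ≤ j → j ≤ l → ¬ (ψ j).isEqualizer)
    (hnm : ∃ j, k ≤ j ∧ j ≤ l ∧ ¬ A.hasMult j) :
    ∃ n₀ : ℕ, ∀ n : ℕ, n₀ ≤ n → ∀ f : Fin n → Val,
      twoValuedQ f →
      fire (A.rounds k) (ψ k) f (some aVal) →
      fire (A.rounds k) (ψ k) f (some bVal) →
      (∀ f' : Fin n → Val, (∀ p, f' p = none ∨ f' p = some bVal) →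
        roundChain A ψ k l f f') ∧
      (∀ f' : Fin n → Val, (∀ p, f' p = none ∨ f' p = some aVal) →
        roundChain A ψ k l f f') := by
  classical
  -- the first mult-free round
  have hex : ∃ j, k ≤ j ∧ j ≤ l ∧ ¬ A.hasMult j := hnm
  obtain ⟨hkJ, hJl, hJm⟩ := Nat.find_spec hex
  set J := Nat.find hex with hJdef
  have hmin : ∀ j, k ≤ j → j < J → A.hasMult j := by
    intro j h1 h2
    by_contra hc
    exact Nat.find_min hex h2 ⟨h1, by omega, hc⟩
  -- global threshold bound
  have hkIcc : k ∈ Finset.Icc k l := Finset.mem_Icc.mpr ⟨le_rfl, hkl⟩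
  set B : ℕ → ℝ := fun j => max (max ((ψ j).thrVal) ((A.rounds j).thrU))
      (max (((A.rounds j).mults.map Prod.fst).headD 0) 0) with hBdef
  set M := (Finset.Icc k l).sup' (Finset.nonempty_Icc.2 hkl) B with hMdef
  have hBM : ∀ j, k ≤ j → j ≤ l → B j ≤ M := fun j h1 h2 =>
    Finset.le_sup' B (Finset.mem_Icc.mpr ⟨h1, h2⟩)
  have hM0 : 0 ≤ M :=
    le_trans (le_trans (le_max_right _ _) (le_max_right _ _)) (hBM k le_rfl hkl)
  have hM1 : M < 1 := by
    rw [hMdef, Finset.sup'_lt_iff]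
    intro j _
    rw [hBdef]
    refine max_lt (max_lt (thrVal_lt_one _) (thrU_lt_one _)) (max_lt (headThr_lt_one _) ?_)
    norm_num
  have hτM : ∀ j, k ≤ j → j ≤ l → (ψ j).thrVal ≤ M := fun j h1 h2 =>
    le_trans (le_trans (le_max_left _ _) (le_max_left _ _)) (hBM j h1 h2)
  have huM : ∀ j, k ≤ j → j ≤ l → (A.rounds j).thrU ≤ M := fun j h1 h2 =>
    le_trans (le_trans (le_max_right _ _) (le_max_left _ _)) (hBM j h1 h2)
  have hheadM : ∀ j, k ≤ j → j ≤ l → ((A.rounds j).mults.map Prod.fst).headD 0 ≤ M :=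
    fun j h1 h2 =>
    le_trans (le_trans (le_max_left _ _) (le_max_right _ _)) (hBM j h1 h2)
  have hround : ∀ j, k ≤ j → j ≤ l →
      (A.rounds j).uniThr = some ((A.rounds j).thrU) ∧ 0 ≤ (A.rounds j).thrU :=
    fun j h1 h2 => uniThr_eq_thrU (huni j (le_trans hk h1) (le_trans h2 hl))
  have heqz : ∀ j, k ≤ j → j ≤ l → ¬ (ψ j).isEqualizer := hne
  -- choice of n₀
  obtain ⟨n₀, hn₀⟩ := exists_nat_gt (4 / (1 - M))
  refine ⟨n₀, ?_⟩
  intro n hn f _htv hfa hfb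
  have h1M : 0 < 1 - M := by linarith
  have hn4 : 4 < (1 - M) * n := by
    have h1 : (4:ℝ) / (1 - M) < n₀ := hn₀
    have h2 : (n₀:ℝ) ≤ n := by exact_mod_cast hn
    rw [div_lt_iff₀ h1M] at h1
    nlinarith
  -- fire data for round k
  obtain ⟨fa, ⟨Hsa, hlea, hsata, hupa⟩, pa, hpa⟩ := hfa
  obtain ⟨fb, ⟨Hsb, hleb, hsatb, hupb⟩, pb, hpb⟩ := hfb
  have hHa : Hsa pa ≤ msetOf f := hlea pa
  have hHb : Hsb pb ≤ msetOf f := hleb pb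
  have hthra : ∀ t ∈ (ψ k).thr, t * n < ((Hsa pa).card : ℝ) := fun t ht => hsata.2 t ht pa
  have hthrb : ∀ t ∈ (ψ k).thr, t * n < ((Hsb pb).card : ℝ) := fun t ht => hsatb.2 t ht pb
  have hupHa : (A.rounds k).update n (Hsa pa) = some aVal := (hupa pa).symm.trans hpa
  have hupHb : (A.rounds k).update n (Hsb pb) = some bVal := (hupb pb).symm.trans hpb
  -- capability of round k for targets over {a, b}
  have capk_ab : ∀ h : Fin n → Val, (∀ p, h p = some aVal ∨ h p = some bVal) →
      roundTrans (A.rounds k) (ψ k) f h := by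
    intro h hsh
    refine ⟨fun p => if h p = some aVal then Hsa pa else Hsb pb, ?_, ⟨?_, ?_⟩, ?_⟩
    · intro p; dsimp only; split; exacts [hHa, hHb]
    · intro he; exact absurd he (heqz k le_rfl hkl)
    · intro t ht p; dsimp only; split; exacts [hthra t ht, hthrb t ht]
    · intro p; dsimp only
      by_cases hp : h p = some aVal
      · rw [if_pos hp, hp]; exact hupHa.symm
      · rw [if_neg hp, (hsh p).resolve_left hp]; exact hupHb.symm
  -- capability of round k when it is the mult-free round
  have capk_mix : (A.rounds k).mults = [] → ∀ h : Fin n → Val,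
      (∀ p, h p = none ∨ h p = some aVal ∨ h p = some bVal) →
      roundTrans (A.rounds k) (ψ k) f h := by
    intro hmk h hsh
    have hmema : (some aVal : Val) ∈ Hsa pa := mem_of_update_nomult hmk hupHa
    have hmemb : (some bVal : Val) ∈ Hsb pb := mem_of_update_nomult hmk hupHb
    have hupm : (A.rounds k).update n (Hsa pa ∪ Hsb pb) = none := by
      refine update_eq_none_mixed_nomult _ hmk _ _ (x := aVal) (y := bVal)
        (by simp [aVal, bVal]) ?_ ?_
      · exact (Multiset.mem_filterMap id _).mpr
          ⟨some aVal, Multiset.mem_union.mpr (Or.inl hmema), rfl⟩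
      · exact (Multiset.mem_filterMap id _).mpr
          ⟨some bVal, Multiset.mem_union.mpr (Or.inr hmemb), rfl⟩
    refine ⟨fun p => if h p = none then Hsa pa ∪ Hsb pb
      else if h p = some aVal then Hsa pa else Hsb pb, ?_, ⟨?_, ?_⟩, ?_⟩
    · intro p; dsimp only; split
      · exact Multiset.union_le hHa hHb
      · split; exacts [hHa, hHb]
    · intro he; exact absurd he (heqz k le_rfl hkl)
    · intro t ht p; dsimp only; split
      · exact lt_of_lt_of_le (hthra t ht)
          (by exact_mod_cast Multiset.card_le_card Multiset.le_union_left)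
      · split; exacts [hthra t ht, hthrb t ht]
    · intro p; dsimp only
      by_cases hp : h p = none
      · rw [if_pos hp, hp]; exact hupm.symm
      · rw [if_neg hp]
        by_cases hp2 : h p = some aVal
        · rw [if_pos hp2, hp2]; exact hupHa.symm
        · rw [if_neg hp2, ((hsh p).resolve_left hp).resolve_left hp2]; exact hupHb.symm
  -- the generic chain for a single carried value w
  have main : ∀ w wb : ℕ, ((w = aVal ∧ wb = bVal) ∨ (w = bVal ∧ wb = aVal)) →
      ∀ f' : Fin n → Val, (∀ p, f' p = none ∨ f' p = some w) →
      roundChain A ψ k l f f' := by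
    intro w wb hw f' hf'
    have hwa : w = aVal ∨ w = bVal := by rcases hw with ⟨h1, _⟩ | ⟨h1, _⟩ <;> [exact Or.inl h1; exact Or.inr h1]
    have hwba : wb = aVal ∨ wb = bVal := by rcases hw with ⟨_, h2⟩ | ⟨_, h2⟩ <;> [exact Or.inr h2; exact Or.inl h2]
    have hwne : w ≠ wb := by
      rcases hw with ⟨h1, h2⟩ | ⟨h1, h2⟩ <;> rw [h1, h2] <;> simp [aVal, bVal]
    set preC : ℕ → ℕ := fun j =>
      if ((A.rounds j).mults.headD (0, Op.min)).2 = Op.min then 1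
      else ⌊(max (max ((A.rounds j).mults.headD (0, Op.min)).1 ((ψ j).thrVal)) 0)
        * (n:ℝ) / 2⌋₊ + 1 with hpreC
    set T : ℕ → Fin n → Val := fun j =>
      if j ≤ k then f
      else if j < J then stepT n (preC j) (some aVal) (some bVal)
      else if j = J then
        stepT n (⌊(max (max ((ψ J).thrVal) ((A.rounds J).thrU)) 0) * n⌋₊ + 1) (some w) (some wb)
      else stepT n (⌊(max ((ψ j).thrVal - (A.rounds j).thrU) 0) * n⌋₊ + 2) none (some w)
      with hT
    have hTk : T k = f := by rw [hT]; dsimp only; rw [if_pos le_rfl]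
    have shapeAB : ∀ j, k < j → j ≤ J → ∀ p, T j p = some aVal ∨ T j p = some bVal := by
      intro j h1 h2 p
      rw [hT]; dsimp only
      rw [if_neg (by omega)]
      rcases lt_or_eq_of_le h2 with h | h
      · rw [if_pos h]; exact stepT_shape _ _ _ _ p
      · rw [if_neg (by omega), if_pos h]
        rcases stepT_shape n _ (some w) (some wb) p with hs | hs
        · rcases hwa with hww | hww
          · exact Or.inl (hs.trans (congrArg some hww))
          · exact Or.inr (hs.trans (congrArg some hww))
        · rcases hwba with hww | hww
          · exact Or.inl (hs.trans (congrArg some hww))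
          · exact Or.inr (hs.trans (congrArg some hww))
    have shapeQW : ∀ j, J < j → ∀ p, T j p = none ∨ T j p = some w := by
      intro j h1 p
      rw [hT]; dsimp only
      rw [if_neg (by omega), if_neg (by omega), if_neg (by omega)]
      exact stepT_shape _ _ _ _ p
    -- assemble the chain
    refine ⟨fun i => if i < l then T (i + 1) else f', ?_, ?_, ?_⟩
    · have h1 : k - 1 < l := by omega
      dsimp only
      rw [if_pos h1, (by omega : k - 1 + 1 = k), hTk]
    · dsimp only
      rw [if_neg (lt_irrefl l)]
    · intro i h1 h2
      have hi1l : i - 1 < l := by omega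
      dsimp only
      rw [if_pos hi1l, (by omega : i - 1 + 1 = i)]
      by_cases hiJ : i < J
      · -- before the mult-free round: target over {a, b}
        have hil : i < l := by omega
        rw [if_pos hil]
        have hshape : ∀ p, T (i + 1) p = some aVal ∨ T (i + 1) p = some bVal :=
          shapeAB (i + 1) (by omega) (by omega)
        rcases eq_or_lt_of_le h1 with hik | hik
        · subst hik
          rw [hTk]; exact capk_ab _ hshape
        · -- intermediate pre-round, has a mult instruction
          have hjl : i ≤ l := by omega
          have hmult : A.hasMult i := hmin i (by omega) hiJ
          obtain ⟨q, rest, hq⟩ := List.exists_cons_of_ne_nil hmult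
          obtain ⟨t1, o1⟩ := q
          have hhead : (A.rounds i).mults.headD (0, Op.min) = (t1, o1) := by
            rw [hq]; rfl
          have ht1M : t1 ≤ M := by
            have hh : ((A.rounds i).mults.map Prod.fst).headD 0 = t1 := by rw [hq]; rfl
            have := hheadM i (by omega) hjl
            rwa [hh] at this
          have hTj : T i = stepT n (preC i) (some aVal) (some bVal) := by
            rw [hT]; dsimp only; rw [if_neg (by omega), if_pos hiJ]
          rw [hTj]
          cases o1 with
          | min =>
            have hC : preC i = 1 := by
              rw [hpreC]; dsimp only; rw [hhead, if_pos rfl]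
            rw [hC]
            exact cap_pre_min (A.rounds i) (ψ i) (hround i (by omega) hjl).1
              (hround i (by omega) hjl).2 hq (heqz i (by omega) hjl) hM0
              (hτM i (by omega) hjl) (huM i (by omega) hjl) ht1M hn4 _ hshape
          | smor =>
            have hC : preC i = ⌊(max (max t1 ((ψ i).thrVal)) 0) * (n:ℝ) / 2⌋₊ + 1 := by
              rw [hpreC]; dsimp only; rw [hhead, if_neg (fun h => Op.noConfusion h)]
            rw [hC]
            exact cap_pre_smor (A.rounds i) (ψ i) (hround i (by omega) hjl).1
              (hround i (by omega) hjl).2 hq (heqz i (by omega) hjl) hM0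
              (hτM i (by omega) hjl) (huM i (by omega) hjl) ht1M hn4 _ hshape
      · -- at or after the mult-free round: target over {?, w}
        have hshape : ∀ p, (if i < l then T (i + 1) else f') p = none ∨
            (if i < l then T (i + 1) else f') p = some w := by
          intro p
          split
          · exact shapeQW (i + 1) (by omega) p
          · exact hf' p
        by_cases hiJ2 : i = J
        · -- the mult-free round itself
          have hmk : (A.rounds i).mults = [] := by
            rw [hiJ2]; exact not_ne_iff.mp hJm
          rcases eq_or_lt_of_le hkJ with hJk | hJk
          · -- J = k : use the fire witnesses together with their union
            have hik : i = k := by omega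
            subst hik
            rw [hTk]
            refine capk_mix hmk _ ?_
            intro p
            rcases hshape p with hp | hp
            · exact Or.inl hp
            · rcases hwa with hww | hww
              · exact Or.inr (Or.inl (hp.trans (congrArg some hww)))
              · exact Or.inr (Or.inr (hp.trans (congrArg some hww)))
          · -- J > k
            have hTJ : T i = stepT n
                (⌊(max (max ((ψ J).thrVal) ((A.rounds J).thrU)) 0) * n⌋₊ + 1)
                (some w) (some wb) := by
              rw [hT]; dsimp only
              rw [if_neg (by omega), if_neg (by omega), if_pos hiJ2]
            rw [hTJ, ← hiJ2]
            exact cap_jstar (A.rounds i) (ψ i) (hround i h1 h2).1 (hround i h1 h2).2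
              hmk (heqz i h1 h2) hM0 (hτM i h1 h2) (huM i h1 h2) hn4 w wb hwne _ hshape
        · -- after the mult-free round
          have hJi : J < i := by omega
          have hTi : T i = stepT n
              (⌊(max ((ψ i).thrVal - (A.rounds i).thrU) 0) * n⌋₊ + 2) none (some w) := by
            rw [hT]; dsimp only
            rw [if_neg (by omega), if_neg (by omega), if_neg hiJ2]
          rw [hTi]
          exact cap_post (A.rounds i) (ψ i) (hround i h1 h2).1 (hround i h1 h2).2
            (heqz i h1 h2) hM0 (hτM i h1 h2) (huM i h1 h2) hn4 w _ hshape
  exact ⟨main bVal aVal (Or.inr ⟨rfl, rfl⟩), main aVal bVal (Or.inl ⟨rfl, rfl⟩)⟩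

end HO
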